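/- arXiv:1507.02980 — 2 statements merged into one kernel-verified Lean document; each statement's English description precedes it below -/
import Mathlib

section
/- Let d = 4N for an integer N ≥ 1, β, γ, ξ, η, D > 0, C(z) = γξ e^{-ηz}/(4πDz) for z > 0, M = ∫₀^∞ C(z)√(4Dz) dz, and M̄ > 0. Suppose q : ℝ^d → ℝ^d satisfies ‖q(y)‖ ≤ √(2N(4β²+1))·‖y‖ for all y, and p : (0,∞) × ℝ^d × ℝ^d → ℝ^d satisfies ‖p(h, u, v)‖ ≤ M̄√(2N)·√(4Dh) for all h > 0, u, v ∈ ℝ^d. If y : [0,T) → ℝ^d is a continuous solution of y(t) = y₀ + ∫₀^t [q(y(τ)) + ∫_τ^t C(s-τ) p(s-τ, y(s), y(τ)) ds] dτ, then for all t ∈ [0,T): ‖y(t)‖ ≤ (‖y₀‖ + M·M̄·√(2N)·T) · e^{t·√(2N(4β²+1))}. -/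
open MeasureTheory Set

lemma aux_integrable {γ ξ η D : ℝ} (hη : 0 < η) (hD : 0 < D)
    (C : ℝ → ℝ) (hC : ∀ z > 0, C z = γ * ξ * Real.exp (-η * z) / (4 * Real.pi * D * z)) :
    IntegrableOn (fun z => C z * Real.sqrt (4 * D * z)) (Ioi (0 : ℝ)) := by
  have h0 : IntegrableOn (fun x : ℝ => x ^ (-(1/2) : ℝ) * Real.exp (-η * x ^ (1:ℝ))) (Ioi 0) :=
    integrableOn_rpow_mul_exp_neg_mul_rpow (by norm_num) one_pos hη
  have h1 : IntegrableOn
      (fun x : ℝ => γ * ξ * Real.sqrt (4 * D) / (4 * Real.pi * D) *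
        (x ^ (-(1/2) : ℝ) * Real.exp (-η * x ^ (1:ℝ)))) (Ioi 0) := h0.const_mul _
  refine h1.congr_fun (fun z hz => ?_) measurableSet_Ioi
  have hz0 : (0:ℝ) < z := hz
  rw [hC z hz0, Real.sqrt_mul (by positivity) z]
  have hsz : Real.sqrt z > 0 := Real.sqrt_pos.mpr hz0
  have hrz : z ^ (-(1/2) : ℝ) = (Real.sqrt z)⁻¹ := by
    rw [Real.rpow_neg hz0.le, ← Real.sqrt_eq_rpow]
  beta_reduce
  rw [hrz, Real.rpow_one]
  have hzz : Real.sqrt z * Real.sqrt z = z := Real.mul_self_sqrt hz0.le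
  have hπ : Real.pi ≠ 0 := Real.pi_ne_zero
  field_simp
  linear_combination (γ * ξ) * hzz.symm

/-- **A priori bound** from the proof of the global existence theorem (Theorem 4.2) of
the hybrid alignment–chemotaxis model: any continuous solution of the delayed Volterra
integral equation on `[0,T)` satisfies the Gronwall-type exponential bound. -/
theorem a_priori_bound
    (N : ℕ) (hN : 1 ≤ N)
    (β γ ξ η D : ℝ) (hβ : 0 < β) (hγ : 0 < γ) (hξ : 0 < ξ) (hη : 0 < η) (hD : 0 < D)
    (C : ℝ → ℝ) (hC : ∀ z > 0, C z = γ * ξ * Real.exp (-η * z) / (4 * Real.pi * D * z))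
    (M : ℝ) (hM : M = ∫ z in Set.Ioi (0 : ℝ), C z * Real.sqrt (4 * D * z))
    (Mbar : ℝ) (hMbar : 0 < Mbar)
    (q : EuclideanSpace ℝ (Fin (4 * N)) → EuclideanSpace ℝ (Fin (4 * N)))
    (hqgrowth : ∀ y : EuclideanSpace ℝ (Fin (4 * N)),
      ‖q y‖ ≤ Real.sqrt (2 * N * (4 * β ^ 2 + 1)) * ‖y‖)
    (p : ℝ → EuclideanSpace ℝ (Fin (4 * N)) → EuclideanSpace ℝ (Fin (4 * N)) →
      EuclideanSpace ℝ (Fin (4 * N)))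
    (hpBound : ∀ h > (0 : ℝ), ∀ u v : EuclideanSpace ℝ (Fin (4 * N)),
      ‖p h u v‖ ≤ Mbar * Real.sqrt (2 * N) * Real.sqrt (4 * D * h))
    (y₀ : EuclideanSpace ℝ (Fin (4 * N))) (T : ℝ) (hT : 0 < T)
    (y : ℝ → EuclideanSpace ℝ (Fin (4 * N)))
    (hy : ContinuousOn y (Set.Ico 0 T))
    (heq : ∀ t ∈ Set.Ico (0 : ℝ) T,
      y t = y₀ + ∫ τ in (0 : ℝ)..t,
        (q (y τ) + ∫ s in τ..t, C (s - τ) • p (s - τ) (y s) (y τ))) :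
    ∀ t ∈ Set.Ico (0 : ℝ) T,
      ‖y t‖ ≤ (‖y₀‖ + M * Mbar * Real.sqrt (2 * N) * T) *
        Real.exp (t * Real.sqrt (2 * N * (4 * β ^ 2 + 1))) := by
  intro t₀ ht₀
  obtain ⟨ht₀0, ht₀T⟩ := ht₀
  set L : ℝ := Real.sqrt (2 * N * (4 * β ^ 2 + 1)) with hLdef
  set K : ℝ := M * Mbar * Real.sqrt (2 * N) with hKdef
  have hL0 : 0 ≤ L := Real.sqrt_nonneg _
  have hfint : IntegrableOn (fun z => C z * Real.sqrt (4 * D * z)) (Ioi (0:ℝ)) :=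
    aux_integrable hη hD C hC
  have hfnn : ∀ z ∈ Ioi (0:ℝ), 0 ≤ C z * Real.sqrt (4 * D * z) := by
    intro z hz
    have hz0 : (0:ℝ) < z := hz
    rw [hC z hz0]
    positivity
  have hM0 : 0 ≤ M := by
    rw [hM]; exact setIntegral_nonneg measurableSet_Ioi hfnn
  have hK0 : 0 ≤ K := by
    have := Real.sqrt_nonneg (2 * (N:ℝ))
    positivity
  -- inner integral bound
  have hinner : ∀ t ∈ Ico (0:ℝ) T, ∀ τ ∈ Icc (0:ℝ) t,
      ‖∫ s in τ..t, C (s - τ) • p (s - τ) (y s) (y τ)‖ ≤ K := by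
    intro t ht τ hτ
    have hτt : τ ≤ t := hτ.2
    have hii : IntervalIntegrable (fun z => C z * Real.sqrt (4 * D * z)) volume 0 (t - τ) :=
      (intervalIntegrable_iff_integrableOn_Ioc_of_le (by linarith)).mpr
        (hfint.mono_set Ioc_subset_Ioi_self)
    have hiis : IntervalIntegrable (fun s => C (s - τ) * Real.sqrt (4 * D * (s - τ)))
        volume τ t := by
      have := hii.comp_sub_right τ
      simpa using this
    have hg : IntervalIntegrable
        (fun s => C (s - τ) * Real.sqrt (4 * D * (s - τ)) * (Mbar * Real.sqrt (2 * N)))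
        volume τ t := hiis.mul_const _
    have hbd : ∀ᵐ s ∂(volume.restrict (Set.uIoc τ t)),
        ‖C (s - τ) • p (s - τ) (y s) (y τ)‖ ≤
          C (s - τ) * Real.sqrt (4 * D * (s - τ)) * (Mbar * Real.sqrt (2 * N)) := by
      rw [uIoc_of_le hτt]
      filter_upwards [ae_restrict_mem measurableSet_Ioc] with s hs
      have hsτ : 0 < s - τ := by simp only [mem_Ioc] at hs; linarith [hs.1]
      have hCp : 0 < C (s - τ) := by rw [hC _ hsτ]; positivity
      rw [norm_smul, Real.norm_eq_abs, abs_of_pos hCp]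
      calc C (s - τ) * ‖p (s - τ) (y s) (y τ)‖
          ≤ C (s - τ) * (Mbar * Real.sqrt (2 * N) * Real.sqrt (4 * D * (s - τ))) :=
            mul_le_mul_of_nonneg_left (hpBound _ hsτ _ _) hCp.le
        _ = C (s - τ) * Real.sqrt (4 * D * (s - τ)) * (Mbar * Real.sqrt (2 * N)) := by ring
    have hval : (∫ s in τ..t, C (s - τ) * Real.sqrt (4 * D * (s - τ)))
        = ∫ z in Ioc (0:ℝ) (t - τ), C z * Real.sqrt (4 * D * z) := by
      rw [intervalIntegral.integral_comp_sub_right (fun z => C z * Real.sqrt (4 * D * z)) τ]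
      rw [sub_self]
      rw [intervalIntegral.integral_of_le (by linarith)]
    have h2 : (∫ z in Ioc (0:ℝ) (t - τ), C z * Real.sqrt (4 * D * z)) ≤ M := by
      rw [hM]
      refine setIntegral_mono_set hfint ?_ (HasSubset.Subset.eventuallyLE Ioc_subset_Ioi_self)
      exact (ae_restrict_mem measurableSet_Ioi).mono hfnn
    have h1 : 0 ≤ ∫ z in Ioc (0:ℝ) (t - τ), C z * Real.sqrt (4 * D * z) := by
      refine setIntegral_nonneg measurableSet_Ioc ?_
      intro z hz; exact hfnn z hz.1
    calc ‖∫ s in τ..t, C (s - τ) • p (s - τ) (y s) (y τ)‖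
        ≤ |∫ s in τ..t, C (s - τ) * Real.sqrt (4 * D * (s - τ)) * (Mbar * Real.sqrt (2 * N))| :=
          intervalIntegral.norm_integral_le_abs_of_norm_le hbd hg
      _ = |(∫ s in τ..t, C (s - τ) * Real.sqrt (4 * D * (s - τ))) * (Mbar * Real.sqrt (2 * N))| := by
          rw [intervalIntegral.integral_mul_const]
      _ = (∫ z in Ioc (0:ℝ) (t - τ), C z * Real.sqrt (4 * D * z)) * (Mbar * Real.sqrt (2 * N)) := by
          rw [hval, abs_of_nonneg (by positivity)]
      _ ≤ M * (Mbar * Real.sqrt (2 * N)) := by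
          have : (0:ℝ) ≤ Mbar * Real.sqrt (2 * N) := by positivity
          exact mul_le_mul_of_nonneg_right h2 this
      _ = K := by rw [hKdef]; ring
  -- main integral inequality
  have hmain : ∀ t ∈ Ico (0:ℝ) T,
      ‖y t‖ ≤ ‖y₀‖ + K * t + ∫ τ in (0:ℝ)..t, L * ‖y τ‖ := by
    intro t ht
    have ht0 : (0:ℝ) ≤ t := ht.1
    have hIcc : Icc (0:ℝ) t ⊆ Ico 0 T := fun x hx => ⟨hx.1, lt_of_le_of_lt hx.2 ht.2⟩
    have hyc : ContinuousOn (fun τ => L * ‖y τ‖) (Icc (0:ℝ) t) :=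
      continuousOn_const.mul (hy.mono hIcc).norm
    have hgL : IntervalIntegrable (fun τ => L * ‖y τ‖) volume 0 t := by
      apply ContinuousOn.intervalIntegrable
      rwa [uIcc_of_le ht0]
    have hgi : IntervalIntegrable (fun τ => L * ‖y τ‖ + K) volume 0 t :=
      hgL.add intervalIntegrable_const
    have hb : ∀ᵐ τ ∂(volume.restrict (Set.uIoc 0 t)),
        ‖q (y τ) + ∫ s in τ..t, C (s - τ) • p (s - τ) (y s) (y τ)‖ ≤ L * ‖y τ‖ + K := by
      rw [uIoc_of_le ht0]
      filter_upwards [ae_restrict_mem measurableSet_Ioc] with τ hτ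
      exact (norm_add_le _ _).trans (add_le_add (hqgrowth _) (hinner t ht τ ⟨hτ.1.le, hτ.2⟩))
    have habs : |∫ τ in (0:ℝ)..t, (L * ‖y τ‖ + K)| = ∫ τ in (0:ℝ)..t, (L * ‖y τ‖ + K) := by
      refine abs_of_nonneg (intervalIntegral.integral_nonneg ht0 fun τ _ => ?_)
      have : 0 ≤ L * ‖y τ‖ := by positivity
      linarith
    have hsplit : (∫ τ in (0:ℝ)..t, (L * ‖y τ‖ + K))
        = (∫ τ in (0:ℝ)..t, L * ‖y τ‖) + K * t := by
      rw [intervalIntegral.integral_add hgL intervalIntegrable_const,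
        intervalIntegral.integral_const, smul_eq_mul, sub_zero]
      ring
    calc ‖y t‖ = ‖y₀ + ∫ τ in (0:ℝ)..t,
          (q (y τ) + ∫ s in τ..t, C (s - τ) • p (s - τ) (y s) (y τ))‖ := by rw [← heq t ht]
      _ ≤ ‖y₀‖ + ‖∫ τ in (0:ℝ)..t,
          (q (y τ) + ∫ s in τ..t, C (s - τ) • p (s - τ) (y s) (y τ))‖ := norm_add_le _ _
      _ ≤ ‖y₀‖ + |∫ τ in (0:ℝ)..t, (L * ‖y τ‖ + K)| :=
          add_le_add le_rfl (intervalIntegral.norm_integral_le_abs_of_norm_le hb hgi)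
      _ = ‖y₀‖ + K * t + ∫ τ in (0:ℝ)..t, L * ‖y τ‖ := by rw [habs, hsplit]; ring
  -- Gronwall
  set t₁ : ℝ := (t₀ + T) / 2 with ht₁def
  have ht₀t₁ : t₀ ≤ t₁ := by rw [ht₁def]; linarith
  have ht₁T : t₁ < T := by rw [ht₁def]; linarith
  have ht₁0 : (0:ℝ) ≤ t₁ := le_trans ht₀0 ht₀t₁
  set c : ℝ := ‖y₀‖ + K * T with hcdef
  have hc0 : 0 ≤ c := by
    have : 0 ≤ K * T := mul_nonneg hK0 hT.le
    have := norm_nonneg y₀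
    rw [hcdef]; linarith
  have hclamp : ∀ τ : ℝ, max 0 (min τ t₁) ∈ Ico (0:ℝ) T := by
    intro τ
    constructor
    · exact le_max_left _ _
    · have : min τ t₁ ≤ t₁ := min_le_right _ _
      have : max 0 (min τ t₁) ≤ t₁ := max_le ht₁0 this
      linarith
  have hyct : Continuous (fun τ : ℝ => y (max 0 (min τ t₁))) :=
    hy.comp_continuous (continuous_const.max (continuous_id.min continuous_const)) hclamp
  set φ : ℝ → ℝ := fun τ => L * ‖y (max 0 (min τ t₁))‖ with hφdef
  have hφc : Continuous φ := continuous_const.mul hyct.norm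
  set F : ℝ → ℝ := fun u => ∫ τ in (0:ℝ)..u, φ τ with hFdef
  have hF : ∀ u, HasDerivAt F (φ u) u := by
    intro u
    exact intervalIntegral.integral_hasDerivAt_right (hφc.intervalIntegrable _ _)
      hφc.stronglyMeasurable.stronglyMeasurableAtFilter hφc.continuousAt
  have hFc : Continuous F := by
    apply continuous_iff_continuousAt.mpr
    intro u; exact (hF u).continuousAt
  have hFeq : ∀ u ∈ Icc (0:ℝ) t₀, F u = ∫ τ in (0:ℝ)..u, L * ‖y τ‖ := by
    intro u hu
    apply intervalIntegral.integral_congr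
    intro τ hτ
    rw [uIcc_of_le hu.1] at hτ
    have h1 : min τ t₁ = τ := min_eq_left (le_trans hτ.2 (le_trans hu.2 ht₀t₁))
    simp only [hφdef, h1, max_eq_right hτ.1]
  have hF0 : F 0 = 0 := intervalIntegral.integral_same
  have hylec : ∀ u ∈ Icc (0:ℝ) t₀, ‖y u‖ ≤ c + F u := by
    intro u hu
    have huT : u ∈ Ico (0:ℝ) T := ⟨hu.1, lt_of_le_of_lt hu.2 ht₀T⟩
    have := hmain u huT
    rw [← hFeq u hu] at this
    have hKu : K * u ≤ K * T := mul_le_mul_of_nonneg_left (by linarith [huT.2]) hK0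
    rw [hcdef]; linarith
  have hFnn : ∀ u ∈ Icc (0:ℝ) t₀, 0 ≤ F u := by
    intro u hu
    refine intervalIntegral.integral_nonneg hu.1 fun τ _ => ?_
    simp only [hφdef]; positivity
  have hgron := norm_le_gronwallBound_of_norm_deriv_right_le
    (f := fun u => c + F u) (f' := φ) (δ := c) (K := L) (ε := 0) (a := 0) (b := t₀)
    (continuous_const.add hFc).continuousOn
    (fun u _ => ((hF u).const_add c).hasDerivWithinAt)
    (by show ‖c + F 0‖ ≤ c; rw [hF0, add_zero, Real.norm_eq_abs, abs_of_nonneg hc0])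
    (fun u hu => by
      have hu' : u ∈ Icc (0:ℝ) t₀ := ⟨hu.1, hu.2.le⟩
      have h1 : min u t₁ = u := min_eq_left (le_trans hu.2.le ht₀t₁)
      have hφu : φ u = L * ‖y u‖ := by simp only [hφdef, h1, max_eq_right hu.1]
      have hfnn' : 0 ≤ c + F u := by linarith [hFnn u hu', hc0]
      rw [hφu, Real.norm_eq_abs, Real.norm_eq_abs, abs_of_nonneg (by positivity),
        abs_of_nonneg hfnn', add_zero]
      exact mul_le_mul_of_nonneg_left (hylec u hu') hL0)
    t₀ ⟨ht₀0, le_refl t₀⟩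
  rw [sub_zero, gronwallBound_ε0] at hgron
  have hfin : ‖y t₀‖ ≤ c + F t₀ := hylec t₀ ⟨ht₀0, le_refl t₀⟩
  have : c + F t₀ ≤ c * Real.exp (L * t₀) := by
    calc c + F t₀ ≤ ‖c + F t₀‖ := le_abs_self _
      _ ≤ c * Real.exp (L * t₀) := hgron
  calc ‖y t₀‖ ≤ c + F t₀ := hfin
    _ ≤ c * Real.exp (L * t₀) := this
    _ = (‖y₀‖ + M * Mbar * Real.sqrt (2 * N) * T) * Real.exp (t₀ * L) := by
        rw [hcdef, hKdef, mul_comm L t₀]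
end

section
/- Let d ∈ ℕ, t̄ ∈ ℝ, and let k₁, k₂, k₃ > 0. Suppose y : [t̄, ∞) → ℝ^d is differentiable and U : [t̄, ∞) → ℝ is a differentiable function satisfying k₂·‖y(t)‖² ≤ U(t) ≤ k₁·‖y(t)‖² and U'(t) ≤ -k₃·‖y(t)‖² for all t ≥ t̄. Then for all t ≥ t̄: ‖y(t)‖ ≤ √(k₁/k₂) · ‖y(t̄)‖ · e^{-(k₃/(2k₁))·(t - t̄)}. -/
open MeasureTheory Set

/-- **Quantitative Lyapunov decay lemma** (proof of Theorem 5.2): if a differentiable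
function `U` along a trajectory `y` satisfies `k₂‖y‖² ≤ U ≤ k₁‖y‖²` and
`U' ≤ -k₃‖y‖²` on `[t̄,∞)`, then `‖y(t)‖ ≤ √(k₁/k₂)‖y(t̄)‖ e^{-(k₃/(2k₁))(t-t̄)}`. -/
theorem lyapunov_decay_lemma
    (d : ℕ) (tb : ℝ) (k₁ k₂ k₃ : ℝ) (hk₁ : 0 < k₁) (hk₂ : 0 < k₂) (hk₃ : 0 < k₃)
    (y : ℝ → EuclideanSpace ℝ (Fin d)) (hy : ∀ t ≥ tb, DifferentiableAt ℝ y t)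
    (U U' : ℝ → ℝ) (hU : ∀ t ≥ tb, HasDerivAt U (U' t) t)
    (hlow : ∀ t ≥ tb, k₂ * ‖y t‖ ^ 2 ≤ U t)
    (hhigh : ∀ t ≥ tb, U t ≤ k₁ * ‖y t‖ ^ 2)
    (hdec : ∀ t ≥ tb, U' t ≤ -k₃ * ‖y t‖ ^ 2) :
    ∀ t ≥ tb, ‖y t‖ ≤
      Real.sqrt (k₁ / k₂) * ‖y tb‖ * Real.exp (-(k₃ / (2 * k₁)) * (t - tb)) := by
  set c : ℝ := k₃ / k₁ with hc
  have hc0 : 0 < c := div_pos hk₃ hk₁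
  set g : ℝ → ℝ := fun t => U t * Real.exp (c * (t - tb)) with hg
  have hg' : ∀ t ≥ tb, HasDerivAt g ((U' t + c * U t) * Real.exp (c * (t - tb))) t := by
    intro t ht
    have he : HasDerivAt (fun s => Real.exp (c * (s - tb))) (c * Real.exp (c * (t - tb))) t := by
      have : HasDerivAt (fun s => c * (s - tb)) c t := by
        simpa using ((hasDerivAt_id t).sub_const tb).const_mul c
      simpa [mul_comm] using this.exp
    have := (hU t ht).mul he
    exact this.congr_deriv (by ring)
  have hanti : AntitoneOn g (Ici tb) := by
    apply antitoneOn_of_deriv_nonpos (convex_Ici tb)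
    · exact ContinuousOn.mono (fun t ht => ((hg' t ht).continuousAt.continuousWithinAt)) le_rfl
    · intro t ht
      exact ((hg' t (le_of_lt (by simpa using ht))).differentiableAt).differentiableWithinAt
    · intro t ht
      rw [interior_Ici] at ht
      have ht' : tb ≤ t := le_of_lt ht
      rw [(hg' t ht').deriv]
      have h1 : U' t + c * U t ≤ 0 := by
        have h2 : c * U t ≤ c * (k₁ * ‖y t‖ ^ 2) :=
          mul_le_mul_of_nonneg_left (hhigh t ht') hc0.le
        have h3 : c * (k₁ * ‖y t‖ ^ 2) = k₃ * ‖y t‖ ^ 2 := by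
          field_simp [hc]
          rw [hc, div_mul_cancel₀ _ hk₁.ne']
          ring
        have := hdec t ht'
        nlinarith
      exact mul_nonpos_of_nonpos_of_nonneg h1 (Real.exp_pos _).le
  intro t ht
  have hgle : g t ≤ g tb := hanti self_mem_Ici ht ht
  have hUt : U t * Real.exp (c * (t - tb)) ≤ U tb := by
    simpa [hg] using hgle
  have hkey : ‖y t‖ ^ 2 ≤ k₁ / k₂ * ‖y tb‖ ^ 2 * Real.exp (-c * (t - tb)) := by
    have h1 : k₂ * ‖y t‖ ^ 2 * Real.exp (c * (t - tb)) ≤ k₁ * ‖y tb‖ ^ 2 :=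
      le_trans (mul_le_mul_of_nonneg_right (hlow t ht) (Real.exp_pos _).le)
        (le_trans hUt (hhigh tb le_rfl))
    have he : Real.exp (-c * (t - tb)) = (Real.exp (c * (t - tb)))⁻¹ := by
      rw [neg_mul, Real.exp_neg]
    rw [he]
    have hE := Real.exp_pos (c * (t - tb))
    calc ‖y t‖ ^ 2 = k₂ * ‖y t‖ ^ 2 * Real.exp (c * (t - tb))
          * (Real.exp (c * (t - tb)))⁻¹ / k₂ := by
          field_simp
      _ ≤ k₁ * ‖y tb‖ ^ 2 * (Real.exp (c * (t - tb)))⁻¹ / k₂ := by gcongr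
      _ = k₁ / k₂ * ‖y tb‖ ^ 2 * (Real.exp (c * (t - tb)))⁻¹ := by ring
  have hrhs : (Real.sqrt (k₁ / k₂) * ‖y tb‖ * Real.exp (-(k₃ / (2 * k₁)) * (t - tb))) ^ 2
      = k₁ / k₂ * ‖y tb‖ ^ 2 * Real.exp (-c * (t - tb)) := by
    rw [mul_pow, mul_pow, Real.sq_sqrt (by positivity)]
    rw [← Real.exp_nat_mul]
    congr 2
    push_cast
    rw [hc]
    field_simp
  have : ‖y t‖ = Real.sqrt (‖y t‖ ^ 2) := (Real.sqrt_sq (norm_nonneg _)).symm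
  rw [this, show Real.sqrt (k₁ / k₂) * ‖y tb‖ * Real.exp (-(k₃ / (2 * k₁)) * (t - tb))
      = Real.sqrt ((Real.sqrt (k₁ / k₂) * ‖y tb‖ * Real.exp (-(k₃ / (2 * k₁)) * (t - tb))) ^ 2)
      from (Real.sqrt_sq (by positivity)).symm]
  exact Real.sqrt_le_sqrt (hrhs ▸ hkey)
end
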